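/- Let k ≥ 1, let b_1,…,b_k be integers with b_i ≥ 2 and c_1,…,c_k positive integers with c_1 ≤ c_2 ≤ … ≤ c_k, such that ∑_{i=1}^k ((b_i-1)/b_i)·c_i = 2 and ∑_{i=1}^k c_i = 3. Then the tuple (b_1,…,b_k; c_1,…,c_k) is one of: (3;3), (2,4;1,2), (3,3;1,2), (2,3,6;1,1,1), (2,4,4;1,1,1), (3,3,3;1,1,1), up to simultaneous permutation of the indices preserving the ordering of the c_i. -/

import Mathlib

lemma aux_bound5 (x y z : ℤ) (hx : 1 ≤ x) (hy : 1 ≤ y) (_hz : 1 ≤ z)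
    (heq : x*y*z = x+y+z+2) : z ≤ 5 := by
  by_contra h
  push_neg at h
  rcases eq_or_lt_of_le (show 1 ≤ x*y from one_le_mul_of_one_le_of_one_le hx hy) with he | hlt
  · have hx1 : x = 1 := by nlinarith
    have hy1 : y = 1 := by nlinarith
    rw [hx1, hy1] at heq; omega
  · have h2 : 2 ≤ x*y := hlt
    nlinarith [mul_nonneg (by omega : (0:ℤ) ≤ z - 6) (by omega : (0:ℤ) ≤ x*y - 2),
      mul_nonneg (sub_nonneg.2 hx) (sub_nonneg.2 hy)]

lemma aux_key3 (x y z : ℤ) (hx : 2 ≤ x) (hy : 2 ≤ y) (hz : 2 ≤ z)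
    (heq : y*z + x*z + x*y = x*y*z) :
    ({(x,1),(y,1),(z,1)} : Multiset (ℤ × ℤ)) = {(2,1),(3,1),(6,1)} ∨
    ({(x,1),(y,1),(z,1)} : Multiset (ℤ × ℤ)) = {(2,1),(4,1),(4,1)} ∨
    ({(x,1),(y,1),(z,1)} : Multiset (ℤ × ℤ)) = {(3,1),(3,1),(3,1)} := by
  have heq' : (x-1)*(y-1)*(z-1) = (x-1)+(y-1)+(z-1)+2 := by ring_nf; linarith
  have h1 : x ≤ 6 := by
    have := aux_bound5 (y-1) (z-1) (x-1) (by omega) (by omega) (by omega) (by linarith [heq'])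
    omega
  have h2 : y ≤ 6 := by
    have := aux_bound5 (x-1) (z-1) (y-1) (by omega) (by omega) (by omega) (by linarith [heq'])
    omega
  have h3 : z ≤ 6 := by
    have := aux_bound5 (x-1) (y-1) (z-1) (by omega) (by omega) (by omega) (by linarith [heq'])
    omega
  clear heq'
  interval_cases x <;> interval_cases y <;> interval_cases z <;> revert heq <;> decide

lemma aux_key2 (x y : ℤ) (hx : 2 ≤ x) (hy : 2 ≤ y) (heq : (x-1)*(y-2) = 2) :
    ({(x,1),(y,2)} : Multiset (ℤ × ℤ)) = {(2,1),(4,2)} ∨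
    ({(x,1),(y,2)} : Multiset (ℤ × ℤ)) = {(3,1),(3,2)} := by
  have hy3 : 3 ≤ y := by
    rcases eq_or_lt_of_le hy with he | hlt
    · rw [← he] at heq; omega
    · omega
  have hx3 : x ≤ 3 := by nlinarith
  have hy4 : y ≤ 4 := by nlinarith
  interval_cases x <;> interval_cases y <;> revert heq <;> decide

theorem stmt_3 (k : ℕ) (hk : 1 ≤ k) (b c : Fin k → ℤ)
    (hb : ∀ i, 2 ≤ b i) (hc : ∀ i, 0 < c i)
    (hmono : ∀ i j : Fin k, i ≤ j → c i ≤ c j)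
    (hsum : ∑ i, (((b i : ℚ) - 1) / (b i)) * (c i) = 2)
    (hdeg : ∑ i, c i = 3) :
    Multiset.map (fun i => (b i, c i)) Finset.univ.val =
        ({((3 : ℤ), (3 : ℤ))} : Multiset (ℤ × ℤ)) ∨
    Multiset.map (fun i => (b i, c i)) Finset.univ.val = {(2, 1), (4, 2)} ∨
    Multiset.map (fun i => (b i, c i)) Finset.univ.val = {(3, 1), (3, 2)} ∨
    Multiset.map (fun i => (b i, c i)) Finset.univ.val = {(2, 1), (3, 1), (6, 1)} ∨
    Multiset.map (fun i => (b i, c i)) Finset.univ.val = {(2, 1), (4, 1), (4, 1)} ∨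
    Multiset.map (fun i => (b i, c i)) Finset.univ.val = {(3, 1), (3, 1), (3, 1)} := by
  have hk3 : k ≤ 3 := by
    by_contra h
    push_neg at h
    have : (k : ℤ) • 1 ≤ ∑ i : Fin k, c i := by
      calc ((k:ℤ) • 1) = ∑ _i : Fin k, (1:ℤ) := by simp
      _ ≤ _ := Finset.sum_le_sum fun i _ => hc i
    simp at this
    omega
  interval_cases k
  · -- k = 1
    have h0 : ((b 0 : ℚ)) ≠ 0 := by have := hb 0; intro h; rw [Int.cast_eq_zero] at h; omega
    rw [Fin.sum_univ_one] at hsum hdeg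
    field_simp at hsum
    have hZ : (b 0 - 1) * c 0 = 2 * b 0 := by
      have hZ' : (b 0 - 1) * c 0 = b 0 * 2 := by exact_mod_cast hsum
      linear_combination hZ'
    rw [hdeg] at hZ
    have hb0 : b 0 = 3 := by omega
    left
    have hmap : Multiset.map (fun i => (b i, c i)) Finset.univ.val = {(b 0, c 0)} := rfl
    rw [hmap, hb0, hdeg]
  · -- k = 2
    have h0 : ((b 0 : ℚ)) ≠ 0 := by have := hb 0; intro h; rw [Int.cast_eq_zero] at h; omega
    have h1 : ((b 1 : ℚ)) ≠ 0 := by have := hb 1; intro h; rw [Int.cast_eq_zero] at h; omega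
    rw [Fin.sum_univ_two] at hsum hdeg
    field_simp at hsum
    have hZ : (b 0 - 1) * c 0 * b 1 + (b 1 - 1) * c 1 * b 0 = 2 * (b 0 * b 1) := by
      have hZ' : (b 0 - 1) * c 0 * b 1 + b 0 * (b 1 - 1) * c 1 = b 0 * b 1 * 2 := by
        exact_mod_cast hsum
      linear_combination hZ'
    have hc0 : c 0 = 1 := by
      have := hc 0; have := hc 1; have := hmono 0 1 (by decide); omega
    have hc1 : c 1 = 2 := by
      have := hc 0; have := hc 1; have := hmono 0 1 (by decide); omega
    rw [hc0, hc1] at hZ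
    have hfac : (b 0 - 1) * (b 1 - 2) = 2 := by ring_nf; ring_nf at hZ; linarith
    have hmap : Multiset.map (fun i => (b i, c i)) Finset.univ.val =
        {(b 0, c 0), (b 1, c 1)} := rfl
    rw [hmap, hc0, hc1]
    rcases aux_key2 (b 0) (b 1) (hb 0) (hb 1) hfac with h | h
    · right; left; exact h
    · right; right; left; exact h
  · -- k = 3
    have h0 : ((b 0 : ℚ)) ≠ 0 := by have := hb 0; intro h; rw [Int.cast_eq_zero] at h; omega
    have h1 : ((b 1 : ℚ)) ≠ 0 := by have := hb 1; intro h; rw [Int.cast_eq_zero] at h; omega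
    have h2 : ((b 2 : ℚ)) ≠ 0 := by have := hb 2; intro h; rw [Int.cast_eq_zero] at h; omega
    rw [Fin.sum_univ_three] at hsum hdeg
    field_simp at hsum
    have hZ : ((b 0 - 1) * c 0 * b 1 + (b 1 - 1) * c 1 * b 0) * b 2 +
        (b 2 - 1) * c 2 * (b 0 * b 1) = 2 * (b 0 * b 1 * b 2) := by
      have hZ' : ((b 0 - 1) * c 0 * b 1 + b 0 * (b 1 - 1) * c 1) * b 2 +
          b 0 * b 1 * (b 2 - 1) * c 2 = b 0 * b 1 * b 2 * 2 := by exact_mod_cast hsum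
      linear_combination hZ'
    have hc0 : c 0 = 1 := by
      have := hc 0; have := hc 1; have := hc 2
      have := hmono 0 1 (by decide); have := hmono 1 2 (by decide); omega
    have hc1 : c 1 = 1 := by
      have := hc 0; have := hc 1; have := hc 2
      have := hmono 0 1 (by decide); have := hmono 1 2 (by decide); omega
    have hc2 : c 2 = 1 := by
      have := hc 0; have := hc 1; have := hc 2
      have := hmono 0 1 (by decide); have := hmono 1 2 (by decide); omega
    rw [hc0, hc1, hc2] at hZ
    have heq : b 1 * b 2 + b 0 * b 2 + b 0 * b 1 = b 0 * b 1 * b 2 := by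
      ring_nf; ring_nf at hZ; linarith
    have hmap : Multiset.map (fun i => (b i, c i)) Finset.univ.val =
        {(b 0, c 0), (b 1, c 1), (b 2, c 2)} := rfl
    rw [hmap, hc0, hc1, hc2]
    rcases aux_key3 (b 0) (b 1) (b 2) (hb 0) (hb 1) (hb 2) heq with h | h | h
    · right; right; right; left; exact h
    · right; right; right; right; left; exact h
    · right; right; right; right; right; exact h
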